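/- For every finite set V with |V| = n and every positive integer M with M < n, there exists an (n, M)-separating system on V with at most ⌈n/M⌉ · ⌈log_{⌈n/M⌉} n⌉ elements. -/

import Mathlib

universe u

/-- A directed mixed graph (DMG): directed edges `D` (no self-loops) and
bidirected edges `B` (symmetric, no self-loops). -/
structure DMG (V : Type u) where
  D : V → V → Prop
  B : V → V → Prop
  D_irrefl : ∀ x, ¬ D x x
  B_symm : ∀ x y, B x y → B y x
  B_irrefl : ∀ x, ¬ B x x

namespace DMG

variable {V : Type u}

/-- `x` is an ancestor of `y` (reflexive-transitive closure of `D`). -/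
def anc (G : DMG V) (x y : V) : Prop := Relation.ReflTransGen G.D x y

/-- ancestors of a set of vertices -/
def ancSet (G : DMG V) (W : Set V) : Set V := {x | ∃ y ∈ W, G.anc x y}

/-- the strongly connected component of `x` -/
def scc (G : DMG V) (x : V) : Set V := {y | G.anc x y ∧ G.anc y x}

/-- parents of a vertex -/
def pa (G : DMG V) (x : V) : Set V := {y | G.D y x}

/-- parents of a set of vertices -/
def paSet (G : DMG V) (W : Set V) : Set V := {y | ∃ x ∈ W, G.D y x}

/-- non-adjacent bidirected edges -/
def BN (G : DMG V) : V → V → Prop := fun x y => G.B x y ∧ ¬ G.D x y ∧ ¬ G.D y x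

/-- the intervened graph `G_Ī` -/
def intervene (G : DMG V) (I : Set V) : DMG V where
  D a b := G.D a b ∧ b ∉ I
  B a b := G.B a b ∧ a ∉ I ∧ b ∉ I
  D_irrefl := fun x h => G.D_irrefl x h.1
  B_symm := fun x y h => ⟨G.B_symm x y h.1, h.2.2, h.2.1⟩
  B_irrefl := fun x h => G.B_irrefl x h.1

/-- the directed skeleton `G^u` -/
def skel (G : DMG V) : SimpleGraph V where
  Adj x y := x ≠ y ∧ (G.D x y ∨ G.D y x)
  symm := ⟨fun _ _ h => ⟨h.1.symm, h.2.elim Or.inr Or.inl⟩⟩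
  loopless := ⟨fun _ h => h.1 rfl⟩

/-- the undirected component graph `G^{uc}` -/
def ucomp (G : DMG V) : SimpleGraph V where
  Adj x y := x ≠ y ∧ ¬ G.D x y ∧ ¬ G.D y x
  symm := ⟨fun _ _ h => ⟨h.1.symm, h.2.2, h.2.1⟩⟩
  loopless := ⟨fun _ h => h.1 rfl⟩

/-- `S` is an SCC of `G` -/
def isSCC (G : DMG V) (S : Set V) : Prop := ∃ x, S = G.scc x

/-- `S` is an SCC-ancestor of the distinct SCC `S'` -/
def sccAncestor (G : DMG V) (S S' : Set V) : Prop :=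
  S ≠ S' ∧ ∃ x ∈ S, ∃ y ∈ S', G.anc x y

/-- `S` is a `k`-order SCC-ancestor of `S'`: there is a directed path from a
vertex of `S` to a vertex of `S'` passing through at most `k-1` SCCs other than
`S` and `S'`. -/
def kOrderSCCAnc (G : DMG V) (k : ℕ) (S S' : Set V) : Prop :=
  S ≠ S' ∧ ∃ p : List V, p ≠ [] ∧ p.Chain' G.D ∧
    (∃ x ∈ S, p.head? = some x) ∧ (∃ y ∈ S', p.getLast? = some y) ∧
    ({C : Set V | ∃ z ∈ p, z ∉ S ∧ z ∉ S' ∧ C = G.scc z}).ncard ≤ k - 1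

/-- `G` has SCC-Anc length `l` : `l` is the least integer such that every
SCC-ancestor of any SCC is an `l`-order SCC-ancestor. -/
def sccAncLength (G : DMG V) (l : ℕ) : Prop :=
  IsLeast {m | ∀ S S' : Set V, G.isSCC S → G.isSCC S' →
    G.sccAncestor S' S → G.kOrderSCCAnc m S' S} l

/-- membership in the first layer `𝒯_1` of the SCC-Anc partition -/
def sccLayer0 (G : DMG V) (S : Set V) : Prop :=
  G.isSCC S ∧ ¬ ∃ S' : Set V, G.isSCC S' ∧ G.sccAncestor S' S

/-- `m` is the least order at which `S'` is an SCC-ancestor of `S` -/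
def minOrd (G : DMG V) (S' S : Set V) (m : ℕ) : Prop :=
  IsLeast {j | G.kOrderSCCAnc j S' S} m

/-- membership in the layer `𝒯_{i+1}` of the SCC-Anc partition (0-indexed `i`):
for `i ≥ 1`, `S ∈ 𝒯_{i+1}` iff some SCC of `𝒯_1` is an `i`-order SCC-ancestor
of `S` and no SCC of `𝒯_1` is only an `r`-order SCC-ancestor of `S` for `r > i`,
i.e. `i` is the largest minimal order of a `𝒯_1` SCC-ancestor of `S`. -/
def sccLayer (G : DMG V) (i : ℕ) (S : Set V) : Prop :=
  if i = 0 then G.sccLayer0 S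
  else G.isSCC S ∧ IsGreatest {m | ∃ S' : Set V, G.sccLayer0 S' ∧ G.minOrd S' S m} i

/-- `T_{k+1}` (0-indexed `k`): the set of vertices in layers `𝒯_1, …, 𝒯_k` -/
def TUnion (G : DMG V) (k : ℕ) : Set V :=
  {v | ∃ i < k, ∃ S : Set V, G.sccLayer i S ∧ v ∈ S}

/-- SCC-Anc separating system on `(V, 𝕋^G)` (layers 0-indexed by `0,…,l`) -/
def SCCAncSepSystem (G : DMG V) (l : ℕ) (𝓘 : Set (Set V)) : Prop :=
  ∀ k ≤ l, ∀ S : Set V, G.sccLayer k S → ∀ X ∈ S,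
    ∃ I ∈ 𝓘, (G.TUnion k ∪ S) \ {X} ⊆ I ∧ X ∉ I

/-- `G` with the directed edge `(F, S)` removed -/
def removeDir (G : DMG V) (F S : V) : DMG V where
  D a b := G.D a b ∧ ¬(a = F ∧ b = S)
  B := G.B
  D_irrefl := fun x h => G.D_irrefl x h.1
  B_symm := G.B_symm
  B_irrefl := fun x h => G.B_irrefl x h

/-- `G` with the bidirected edge `{S, R}` removed -/
def removeBi (G : DMG V) (S R : V) : DMG V where
  D := G.D
  B a b := G.B a b ∧ ¬((a = S ∧ b = R) ∨ (a = R ∧ b = S))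
  D_irrefl := G.D_irrefl
  B_symm := by
    intro x y h
    refine ⟨G.B_symm x y h.1, ?_⟩
    rintro (⟨h1, h2⟩ | ⟨h1, h2⟩)
    · exact h.2 (Or.inr ⟨h2, h1⟩)
    · exact h.2 (Or.inl ⟨h2, h1⟩)
  B_irrefl := fun x h => G.B_irrefl x h.1

end DMG

/-- kinds of edges along a mixed path: forward directed, backward directed, bidirected -/
inductive EKind | fwd | bwd | bi

/-- a mixed path skeleton: `k ≥ 1` steps, vertices `Z 0, …, Z k`, edges `E 0, …, E (k-1)`
(step `i` joins `Z i` and `Z (i+1)`). -/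
structure MPath (V : Type u) where
  k : ℕ
  Z : ℕ → V
  E : ℕ → EKind
  hk : 1 ≤ k

namespace MPath

variable {V : Type u}

/-- the path is a path of `G` -/
def valid (p : MPath V) (G : DMG V) : Prop :=
  ∀ i < p.k,
    (p.E i = EKind.fwd → G.D (p.Z i) (p.Z (i+1))) ∧
    (p.E i = EKind.bwd → G.D (p.Z (i+1)) (p.Z i)) ∧
    (p.E i = EKind.bi → G.B (p.Z i) (p.Z (i+1)))

/-- the step has an arrowhead at its second endpoint -/
def headAtSnd : EKind → Prop
  | EKind.fwd => True
  | EKind.bi => True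
  | EKind.bwd => False

/-- the step has an arrowhead at its first endpoint -/
def headAtFst : EKind → Prop
  | EKind.bwd => True
  | EKind.bi => True
  | EKind.fwd => False

/-- `Z i` is a collider on the path (meaningful for `1 ≤ i ≤ k-1`) -/
def collider (p : MPath V) (i : ℕ) : Prop :=
  headAtSnd (p.E (i-1)) ∧ headAtFst (p.E i)

end MPath

/-- the separation rule: `d`-separation or `σ`-separation -/
inductive SepRule | d | s

/-- the path between `x` and `y` is `r`-blocked by `S` in `G` -/
def MPath.blocked {V : Type u} (p : MPath V) (G : DMG V) (r : SepRule) (S : Set V)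
    (x y : V) : Prop :=
  ∃ i, 1 ≤ i ∧ i < p.k ∧
    ((p.collider i ∧ p.Z i ∉ G.ancSet (S ∪ {x, y})) ∨
     (¬ p.collider i ∧ p.Z i ∈ S ∧
       (r = SepRule.d ∨
        (p.E i = EKind.fwd ∧ p.Z (i+1) ∉ G.scc (p.Z i)) ∨
        (p.E (i-1) = EKind.bwd ∧ p.Z (i-1) ∉ G.scc (p.Z i)))))

/-- `S` `r`-separates `x` and `y` in `G` -/
def rSep {V : Type u} (G : DMG V) (r : SepRule) (S : Set V) (x y : V) : Prop :=
  ∀ p : MPath V, p.valid G → p.Z 0 = x → p.Z p.k = y → p.blocked G r S x y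

/-- the `r`-independence model of `G` -/
def IM {V : Type u} (G : DMG V) (r : SepRule) : Set (V × V × Set V) :=
  {t | t.1 ≠ t.2.1 ∧ t.1 ∉ t.2.2 ∧ t.2.1 ∉ t.2.2 ∧ rSep G r t.2.2 t.1 t.2.1}

/-- `G` and `H` are `𝓘`-`r`-Markov equivalent -/
def IMEquiv {V : Type u} (G H : DMG V) (r : SepRule) (𝓘 : Set (Set V)) : Prop :=
  ∀ I ∈ 𝓘, IM (G.intervene I) r = IM (H.intervene I) r

/-- a `d`-inducing path between `x` and `y`: every collider is an ancestor of `{x,y}` -/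
def MPath.dInducing {V : Type u} (p : MPath V) (G : DMG V) (x y : V) : Prop :=
  ∀ i, 1 ≤ i → i < p.k → p.collider i → p.Z i ∈ G.ancSet {x, y}

/-- a `σ`-inducing path between `x` and `y` -/
def MPath.sInducing {V : Type u} (p : MPath V) (G : DMG V) (x y : V) : Prop :=
  p.dInducing G x y ∧
  ∀ i, 1 ≤ i → i < p.k → ¬ p.collider i →
    (p.E (i-1) = EKind.bwd → p.Z (i-1) ∈ G.scc (p.Z i)) ∧
    (p.E i = EKind.fwd → p.Z (i+1) ∈ G.scc (p.Z i))

/-- an `r`-inducing path -/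
def MPath.rInducing {V : Type u} (p : MPath V) (G : DMG V) (r : SepRule) (x y : V) : Prop :=
  match r with
  | SepRule.d => p.dInducing G x y
  | SepRule.s => p.sInducing G x y

/-- colored separating system on `(V, C)` -/
def ColoredSepSystem {V : Type u} {γ : Type*} (C : V → γ) (𝓘 : Set (Set V)) : Prop :=
  ∀ X Y : V, C X ≠ C Y → ∃ I ∈ 𝓘, X ∈ I ∧ Y ∉ I

/-- non-adjacent separating system on `(V, D)` -/
def NonAdjSepSystem {V : Type u} (G : DMG V) (𝓘 : Set (Set V)) : Prop :=
  ∀ X Y : V, X ≠ Y → ¬ G.D X Y → ¬ G.D Y X →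
    ∃ I ∈ 𝓘, G.paSet {X, Y} ⊆ I ∧ X ∉ I ∧ Y ∉ I

/-- adjacent separating system on `(V, D)` -/
def AdjSepSystem {V : Type u} (G : DMG V) (𝓘 : Set (Set V)) : Prop :=
  ∀ X Y : V, G.D X Y → ¬ G.D Y X →
    (∃ I ∈ 𝓘, G.paSet {X, Y} \ {X, Y} ⊆ I ∧ X ∉ I ∧ Y ∉ I) ∧
    (∃ I' ∈ 𝓘, G.paSet {X, Y} \ {Y} ⊆ I' ∧ X ∈ I' ∧ Y ∉ I')

/-- the minimum edge clique cover number `cc(H)` -/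
noncomputable def ecc {V : Type u} (H : SimpleGraph V) : ℕ :=
  sInf {K | ∃ C : Fin K → Set V, (∀ k, H.IsClique (C k)) ∧
    ∀ x y : V, H.Adj x y → ∃ k, x ∈ C k ∧ y ∈ C k}

/-- two edges that must receive different colors in a strong edge coloring:
they are distinct and share an endpoint or are both incident to a common third edge -/
def StrongAdjE {V : Type u} (H : SimpleGraph V) (e₁ e₂ : Sym2 V) : Prop :=
  e₁ ≠ e₂ ∧ ((∃ v, v ∈ e₁ ∧ v ∈ e₂) ∨
    ∃ e₃ ∈ H.edgeSet, e₃ ≠ e₁ ∧ e₃ ≠ e₂ ∧ (∃ v, v ∈ e₁ ∧ v ∈ e₃) ∧ ∃ u, u ∈ e₂ ∧ u ∈ e₃)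

/-- the strong edge chromatic number `χ_s(H)` -/
noncomputable def strongChrom {V : Type u} (H : SimpleGraph V) : ℕ :=
  sInf {K | ∃ f : Sym2 V → Fin K, ∀ e₁ ∈ H.edgeSet, ∀ e₂ ∈ H.edgeSet,
    StrongAdjE H e₁ e₂ → f e₁ ≠ f e₂}

/-- auxiliary: two numbers below `b^t` with the same base-`b` digits are equal -/
lemma digits_inj_aux (b : ℕ) (hb : 2 ≤ b) : ∀ t x y, x < b ^ t → y < b ^ t →
    (∀ j < t, x / b ^ j % b = y / b ^ j % b) → x = y := by
  intro t
  induction t with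
  | zero =>
    intro x y hx hy _
    simp only [pow_zero, Nat.lt_one_iff] at hx hy
    omega
  | succ t ih =>
    intro x y hx hy h
    have hb0 : 0 < b := by omega
    have h0 : x % b = y % b := by simpa using h 0 (by omega)
    have hx' : x / b < b ^ t := by
      rw [Nat.div_lt_iff_lt_mul hb0, ← pow_succ]; exact hx
    have hy' : y / b < b ^ t := by
      rw [Nat.div_lt_iff_lt_mul hb0, ← pow_succ]; exact hy
    have hd : ∀ j < t, x / b / b ^ j % b = y / b / b ^ j % b := by
      intro j hj
      have := h (j + 1) (by omega)
      rwa [Nat.div_div_eq_div_mul, Nat.div_div_eq_div_mul, ← pow_succ']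
    have hdiv : x / b = y / b := ih (x / b) (y / b) hx' hy' hd
    rw [← Nat.div_add_mod x b, ← Nat.div_add_mod y b, hdiv, h0]

/-- there is an `(n, M)`-separating system on `V` with at most
`⌈n/M⌉·⌈log_{⌈n/M⌉} n⌉` elements. -/
theorem nM_separating_system_exists {V : Type u} [Fintype V] (n M : ℕ)
    (hn : Fintype.card V = n) (hM : 0 < M) (hMn : M < n) :
    ∃ 𝓘 : Set (Set V), 𝓘.Finite ∧ (∀ I ∈ 𝓘, I.ncard ≤ M) ∧
      (∀ X Y : V, X ≠ Y → ∃ I ∈ 𝓘, X ∈ I ∧ Y ∉ I) ∧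
      𝓘.ncard ≤ ((n + M - 1) / M) * Nat.clog ((n + M - 1) / M) n := by
  classical
  set b := (n + M - 1) / M with hb_def
  have hn2 : 2 ≤ n := by omega
  have hb2 : 2 ≤ b := by
    rw [hb_def, Nat.le_div_iff_mul_le hM]; omega
  have hb0 : 0 < b := by omega
  have hnbM : n ≤ M * b := by
    have h1 : M * b + (n + M - 1) % M = n + M - 1 := Nat.div_add_mod _ _
    have h2 : (n + M - 1) % M < M := Nat.mod_lt _ hM
    omega
  set t := Nat.clog b n with ht_def
  have hnt : n ≤ b ^ t := Nat.le_pow_clog (by omega) n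
  let f : ℕ → ℕ → ℕ := fun j x => if j = 0 then x % b else (x / b ^ j + x) % b
  have f_lt : ∀ j x, f j x < b := by
    intro j x
    simp only [f]
    split <;> exact Nat.mod_lt _ hb0
  let e : V ≃ Fin n := Fintype.equivFinOfCardEq hn
  have key : ∀ j x y, f j x = f j y → x / b = y / b → x = y := by
    intro j x y hf hdiv
    have hx := Nat.div_add_mod x b
    have hy := Nat.div_add_mod y b
    have hmod : x % b = y % b := by
      cases j with
      | zero => simpa [f] using hf
      | succ j =>
        have hj : x / b ^ (j + 1) = y / b ^ (j + 1) := by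
          rw [pow_succ', ← Nat.div_div_eq_div_mul, ← Nat.div_div_eq_div_mul, hdiv]
        simp only [f, Nat.succ_ne_zero, if_false] at hf
        rw [hj] at hf
        exact Nat.ModEq.add_left_cancel' _ hf
    rw [← Nat.div_add_mod x b, ← Nat.div_add_mod y b, hdiv, hmod]
  have code_inj : ∀ x y, x < n → y < n → (∀ j < t, f j x = f j y) → x = y := by
    intro x y hx hy h
    have ht1 : 0 < t := Nat.clog_pos (by omega) (by omega)
    have h0 : x % b = y % b := by simpa [f] using h 0 ht1
    have hd : ∀ j < t, x / b ^ j % b = y / b ^ j % b := by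
      intro j hj
      cases j with
      | zero => simpa using h0
      | succ j =>
        have hf := h (j + 1) hj
        simp only [f, Nat.succ_ne_zero, if_false] at hf
        have h1 : x / b ^ (j + 1) + x ≡ y / b ^ (j + 1) + y [MOD b] := hf
        have h2 : x ≡ y [MOD b] := h0
        exact Nat.ModEq.add_right_cancel h2 h1
    exact digits_inj_aux b hb2 t x y (lt_of_lt_of_le hx hnt) (lt_of_lt_of_le hy hnt) hd
  let F : ℕ × ℕ → Set V := fun p => {v | f p.1 (e v : ℕ) = p.2}
  let FAM : Finset (Set V) := (Finset.range t ×ˢ Finset.range b).image F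
  refine ⟨↑FAM, FAM.finite_toSet, ?_, ?_, ?_⟩
  · intro I hI
    rw [Finset.mem_coe, Finset.mem_image] at hI
    obtain ⟨p, hp, rfl⟩ := hI
    have hdlt : ∀ v : F p, ((e v.1 : ℕ) / b) < M := by
      intro v
      rw [Nat.div_lt_iff_lt_mul hb0]
      exact lt_of_lt_of_le (e v.1).isLt hnbM
    have hinj : Function.Injective (fun v : F p => (⟨(e v.1 : ℕ) / b, hdlt v⟩ : Fin M)) := by
      intro v w hvw
      simp only [Fin.mk.injEq] at hvw
      have h1 : f p.1 (e v.1 : ℕ) = p.2 := v.2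
      have h2 : f p.1 (e w.1 : ℕ) = p.2 := w.2
      have := key p.1 _ _ (h1.trans h2.symm) hvw
      exact Subtype.ext (e.injective (Fin.ext this))
    calc (F p).ncard = Nat.card (F p) := (Nat.card_coe_set_eq _).symm
      _ ≤ Nat.card (Fin M) := Nat.card_le_card_of_injective _ hinj
      _ = M := by simp
  · intro X Y hXY
    have hne : (e X : ℕ) ≠ (e Y : ℕ) := fun h => hXY (e.injective (Fin.ext h))
    have hex : ∃ j < t, f j (e X : ℕ) ≠ f j (e Y : ℕ) := by
      by_contra h
      push_neg at h
      exact hne (code_inj _ _ (e X).isLt (e Y).isLt h)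
    obtain ⟨j, hj, hfne⟩ := hex
    refine ⟨F (j, f j (e X : ℕ)), ?_, ?_, ?_⟩
    · rw [Finset.mem_coe, Finset.mem_image]
      exact ⟨(j, f j (e X : ℕ)), Finset.mem_product.2
        ⟨Finset.mem_range.2 hj, Finset.mem_range.2 (f_lt j _)⟩, rfl⟩
    · exact rfl
    · exact fun h => hfne h.symm
  · rw [Set.ncard_coe_finset]
    calc FAM.card ≤ (Finset.range t ×ˢ Finset.range b).card := Finset.card_image_le
      _ = t * b := by simp
      _ = b * t := mul_comm _ _
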